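/- arXiv:1810.08711 — 5 statements merged into one kernel-verified Lean document; each statement's English description precedes it below -/
import Mathlib

section
/- Let G be a finite connected undirected graph on N vertices with closed neighbourhoods N_i (containing i). For any vector x of strictly positive reals and any vector p of strictly positive reals, ∑_i x_i · (∑_{j ∈ N_i} x_j) ≤ ∑_i x_i^2 · (∑_{j ∈ N_i} p_j) / p_i, i.e. the rate allocation φ_i(x) = x_i / ∑_{j ∈ N_i} x_j minimizes ∑_i x_i · (μ_i / x_i)^{-1} over allocations of the form μ_i = p_i / ∑_{j ∈ N_i} p_j. -/
theorem stmt_3 {V : Type*} [Fintype V] [DecidableEq V]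
    (G : SimpleGraph V) [DecidableRel G.Adj] (hconn : G.Connected)
    (x p : V → ℝ) (hx : ∀ i, 0 < x i) (hp : ∀ i, 0 < p i) :
    ∑ i, x i * ∑ j ∈ insert i (G.neighborFinset i), x j ≤
      ∑ i, x i ^ 2 * (∑ j ∈ insert i (G.neighborFinset i), p j) / p i := by
  classical
  set N : V → Finset V := fun i => insert i (G.neighborFinset i) with hN
  have hsym : ∀ i j : V, j ∈ N i ↔ i ∈ N j := by
    intro i j
    simp only [hN, Finset.mem_insert, SimpleGraph.mem_neighborFinset]
    constructor
    · rintro (h | h)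
      · exact Or.inl h.symm
      · exact Or.inr h.symm
    · rintro (h | h)
      · exact Or.inl h.symm
      · exact Or.inr h.symm
  have swap : ∀ f : V → V → ℝ,
      ∑ i, ∑ j ∈ N i, f i j = ∑ i, ∑ j ∈ N i, f j i := by
    intro f
    rw [Finset.sum_comm' (s' := fun j => N j) (t' := Finset.univ)]
    intro i j
    simp [hsym i j]
  have hL : ∑ i, x i * ∑ j ∈ N i, x j = ∑ i, ∑ j ∈ N i, x i * x j := by
    simp [Finset.mul_sum]
  have hR : ∑ i, x i ^ 2 * (∑ j ∈ N i, p j) / p i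
      = ∑ i, ∑ j ∈ N i, x i ^ 2 * p j / p i := by
    refine Finset.sum_congr rfl fun i _ => ?_
    rw [Finset.mul_sum, Finset.sum_div]
  have key : (2:ℝ) * (∑ i, ∑ j ∈ N i, x i * x j)
      ≤ 2 * (∑ i, ∑ j ∈ N i, x i ^ 2 * p j / p i) := by
    have e1 : (2:ℝ) * (∑ i, ∑ j ∈ N i, x i * x j)
        = ∑ i, ∑ j ∈ N i, (x i * x j + x j * x i) := by
      rw [two_mul]
      nth_rewrite 2 [swap (fun i j => x i * x j)]
      rw [← Finset.sum_add_distrib]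
      refine Finset.sum_congr rfl fun i _ => ?_
      rw [← Finset.sum_add_distrib]
    have e2 : (2:ℝ) * (∑ i, ∑ j ∈ N i, x i ^ 2 * p j / p i)
        = ∑ i, ∑ j ∈ N i, (x i ^ 2 * p j / p i + x j ^ 2 * p i / p j) := by
      rw [two_mul]
      nth_rewrite 2 [swap (fun i j => x i ^ 2 * p j / p i)]
      rw [← Finset.sum_add_distrib]
      refine Finset.sum_congr rfl fun i _ => ?_
      rw [← Finset.sum_add_distrib]
    rw [e1, e2]
    refine Finset.sum_le_sum fun i _ => Finset.sum_le_sum fun j _ => ?_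
    have hpi := hp i
    have hpj := hp j
    rw [div_add_div _ _ (ne_of_gt hpi) (ne_of_gt hpj), le_div_iff₀ (by positivity)]
    nlinarith [sq_nonneg (x i * p j - x j * p i), mul_pos hpi hpj, sq_nonneg (x i - x j)]
  rw [hL, hR] at *
  linarith
end

section
/- Let G be a finite connected undirected graph with closed neighbourhoods N_i, and let x, p be vectors of strictly positive reals. Then ∑_i x_i^2 (∑_{j ∈ N_i} p_j)/p_i = ∑_i x_i ∑_{j ∈ N_i} x_j holds if and only if p_i / x_i is the same constant for all i. -/
theorem stmt_4 {V : Type*} [Fintype V] [DecidableEq V]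
    (G : SimpleGraph V) [DecidableRel G.Adj] (hconn : G.Connected)
    (x p : V → ℝ) (hx : ∀ i, 0 < x i) (hp : ∀ i, 0 < p i) :
    (∑ i, x i ^ 2 * (∑ j ∈ insert i (G.neighborFinset i), p j) / p i =
      ∑ i, x i * ∑ j ∈ insert i (G.neighborFinset i), x j) ↔
    ∃ c : ℝ, ∀ i, p i / x i = c := by
  have hxne : ∀ i, x i ≠ 0 := fun i => (hx i).ne'
  have hpne : ∀ i, p i ≠ 0 := fun i => (hp i).ne'
  set f : V → V → ℝ := fun i j => x i ^ 2 * p j / p i - x i * x j with hf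
  -- The equation is equivalent to D = 0
  have hsplit : ∀ i, x i ^ 2 * (∑ j ∈ insert i (G.neighborFinset i), p j) / p i
      - x i * ∑ j ∈ insert i (G.neighborFinset i), x j
      = ∑ j ∈ insert i (G.neighborFinset i), f i j := by
    intro i
    rw [Finset.mul_sum, Finset.sum_div, Finset.mul_sum, ← Finset.sum_sub_distrib]
  have key : (∑ i, x i ^ 2 * (∑ j ∈ insert i (G.neighborFinset i), p j) / p i =
      ∑ i, x i * ∑ j ∈ insert i (G.neighborFinset i), x j) ↔
      ∑ i, ∑ j ∈ insert i (G.neighborFinset i), f i j = 0 := by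
    rw [← sub_eq_zero, ← Finset.sum_sub_distrib]
    exact Eq.congr (Finset.sum_congr rfl fun i _ => hsplit i) rfl
  -- remove diagonal
  have hdiag : ∀ i, f i i = 0 := by
    intro i
    show x i ^ 2 * p i / p i - x i * x i = 0
    rw [mul_div_assoc, div_self (hpne i)]
    ring
  have key2 : ∀ i, ∑ j ∈ insert i (G.neighborFinset i), f i j
      = ∑ j ∈ G.neighborFinset i, f i j := by
    intro i
    rw [Finset.sum_insert (by simp), hdiag, zero_add]
  set D : ℝ := ∑ i, ∑ j ∈ G.neighborFinset i, f i j with hD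
  have key3 : (∑ i, x i ^ 2 * (∑ j ∈ insert i (G.neighborFinset i), p j) / p i =
      ∑ i, x i * ∑ j ∈ insert i (G.neighborFinset i), x j) ↔ D = 0 := by
    rw [key]
    exact Eq.congr (Finset.sum_congr rfl fun i _ => key2 i) rfl
  -- symmetrize
  have hswap : ∑ i, ∑ j ∈ G.neighborFinset i, f j i = D := by
    rw [hD]
    rw [Finset.sum_comm' (t' := Finset.univ) (s' := fun j => G.neighborFinset j)
      (by intro i j
          simp [SimpleGraph.mem_neighborFinset, SimpleGraph.adj_comm])]
  have h2D : 2 * D = ∑ i, ∑ j ∈ G.neighborFinset i,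
      (x i * p j - x j * p i) ^ 2 / (p i * p j) := by
    have : 2 * D = D + D := by ring
    rw [this]
    nth_rewrite 2 [← hswap]
    rw [hD, ← Finset.sum_add_distrib]
    refine Finset.sum_congr rfl fun i _ => ?_
    rw [← Finset.sum_add_distrib]
    refine Finset.sum_congr rfl fun j _ => ?_
    show (x i ^ 2 * p j / p i - x i * x j) + (x j ^ 2 * p i / p j - x j * x i)
        = (x i * p j - x j * p i) ^ 2 / (p i * p j)
    field_simp [hpne i, hpne j]
    ring
  have hnonneg : ∀ i ∈ (Finset.univ : Finset V), ∀ j ∈ G.neighborFinset i,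
      (0:ℝ) ≤ (x i * p j - x j * p i) ^ 2 / (p i * p j) :=
    fun i _ j _ => div_nonneg (sq_nonneg _) (le_of_lt (mul_pos (hp i) (hp j)))
  constructor
  · intro heq
    have hD0 : D = 0 := key3.mp heq
    have h0 : ∑ i, ∑ j ∈ G.neighborFinset i,
        (x i * p j - x j * p i) ^ 2 / (p i * p j) = 0 := by
      rw [← h2D, hD0]; ring
    have hzero : ∀ i j, G.Adj i j → x i * p j = x j * p i := by
      intro i j hij
      have h1 := (Finset.sum_eq_zero_iff_of_nonneg
        (fun i _ => Finset.sum_nonneg (hnonneg i (Finset.mem_univ i)))).mp h0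
        i (Finset.mem_univ i)
      have h2 := (Finset.sum_eq_zero_iff_of_nonneg (hnonneg i (Finset.mem_univ i))).mp h1
        j ((SimpleGraph.mem_neighborFinset G i j).mpr hij)
      have := div_eq_zero_iff.mp h2
      rcases this with h | h
      · have := pow_eq_zero_iff (n := 2) (by norm_num) |>.mp h
        linarith [this]
      · exact absurd h (mul_ne_zero (hpne i) (hpne j)).elim
    -- propagate along walks
    have hadj : ∀ i j, G.Adj i j → p i / x i = p j / x j := by
      intro i j hij
      have := hzero i j hij
      rw [div_eq_div_iff (hxne i) (hxne j)]
      linarith [this]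
    have hreach : ∀ i j : V, G.Reachable i j → p i / x i = p j / x j := by
      intro i j hr
      obtain ⟨w⟩ := hr
      induction w with
      | nil => rfl
      | cons h w ih => rw [hadj _ _ h]; exact ih
    obtain ⟨i0⟩ := hconn.nonempty
    exact ⟨p i0 / x i0, fun i => hreach i i0 (hconn i i0)⟩
  · rintro ⟨c, hc⟩
    obtain ⟨i0⟩ := hconn.nonempty
    have hcpos : 0 < c := hc i0 ▸ div_pos (hp i0) (hx i0)
    have hpc : ∀ i, p i = c * x i := by
      intro i
      have := hc i
      rw [div_eq_iff (hxne i)] at this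
      exact this
    refine Finset.sum_congr rfl fun i _ => ?_
    have hsum : ∑ j ∈ insert i (G.neighborFinset i), p j
        = c * ∑ j ∈ insert i (G.neighborFinset i), x j := by
      rw [Finset.mul_sum]
      exact Finset.sum_congr rfl fun j _ => hpc j
    rw [hsum, hpc i,
      show x i ^ 2 * (c * ∑ j ∈ insert i (G.neighborFinset i), x j)
        = (c * x i) * (x i * ∑ j ∈ insert i (G.neighborFinset i), x j) by ring,
      mul_div_assoc, mul_comm (c * x i),
      div_mul_cancel₀ _ (mul_ne_zero hcpos.ne' (hxne i))]
end

section
/- Let ψ : ℝ_+^N → ℝ_+^N satisfy: (A) each ψ_i is non-increasing in x_j for every j ≠ i, and (B) each ψ_i is 0-homogeneous (ψ_i(s·x) = ψ_i(x) for all s > 0). Let p ∈ ℝ_+^N with all p_i > 0, let x ∈ ℝ_+^N, and let k be an index maximizing x_i/p_i over i, with x_k > 0. Then ψ_k(x) ≥ ψ_k(p). -/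
theorem stmt_7 {N : ℕ} (hN : 0 < N)
    (ψ : (Fin N → ℝ) → Fin N → ℝ)
    (hnonneg : ∀ x : Fin N → ℝ, (∀ j, 0 ≤ x j) → ∀ i, 0 ≤ ψ x i)
    (hA : ∀ (i : Fin N) (x y : Fin N → ℝ), (∀ j, 0 ≤ x j) → (∀ j, 0 ≤ y j) →
      x i = y i → (∀ j, j ≠ i → x j ≤ y j) → ψ y i ≤ ψ x i)
    (hB : ∀ (s : ℝ), 0 < s → ∀ (x : Fin N → ℝ), (∀ j, 0 ≤ x j) →
      ∀ i, ψ (fun j => s * x j) i = ψ x i)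
    (p : Fin N → ℝ) (hp : ∀ i, 0 < p i)
    (x : Fin N → ℝ) (hx : ∀ i, 0 ≤ x i)
    (k : Fin N) (hk : ∀ j, x j / p j ≤ x k / p k) (hxk : 0 < x k) :
    ψ p k ≤ ψ x k := by
  set s : ℝ := x k / p k with hs
  have hspos : 0 < s := div_pos hxk (hp k)
  have hscale : ψ (fun j => s * p j) k = ψ p k :=
    hB s hspos p (fun j => (hp j).le) k
  have hynn : ∀ j, 0 ≤ s * p j := fun j => mul_nonneg hspos.le (hp j).le
  have hxy : ∀ j, j ≠ k → x j ≤ s * p j := by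
    intro j _
    have := hk j
    calc x j = x j / p j * p j := (div_mul_cancel₀ _ (hp j).ne').symm
    _ ≤ s * p j := mul_le_mul_of_nonneg_right this (hp j).le
  have heq : x k = s * p k := by
    rw [hs, div_mul_cancel₀ _ (hp k).ne']
  have := hA k x (fun j => s * p j) hx hynn heq hxy
  linarith [this, hscale]
end

section
/- For N = 4 and strictly positive reals x_1, x_2, x_3, x_4 arranged on a cycle (indices mod 4), ∑_{i=1}^{4} x_i (x_i − x_{i+1}) / (x_{i−1} + x_i + x_{i+1}) ≥ 0. -/
theorem stmt_11 (x1 x2 x3 x4 : ℝ) (h1 : 0 < x1) (h2 : 0 < x2) (h3 : 0 < x3)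
    (h4 : 0 < x4) :
    x1 * (x1 - x2) / (x4 + x1 + x2) + x2 * (x2 - x3) / (x1 + x2 + x3) +
      x3 * (x3 - x4) / (x2 + x3 + x4) + x4 * (x4 - x1) / (x3 + x4 + x1) ≥ 0 := by
  have hd1 : (0:ℝ) < x4 + x1 + x2 := by linarith
  have hd2 : (0:ℝ) < x1 + x2 + x3 := by linarith
  have hd3 : (0:ℝ) < x2 + x3 + x4 := by linarith
  have hd4 : (0:ℝ) < x3 + x4 + x1 := by linarith
  rw [div_add_div _ _ hd1.ne' hd2.ne', div_add_div _ _ (by positivity) hd3.ne',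
    div_add_div _ _ (by positivity) hd4.ne', ge_iff_le]
  apply div_nonneg _ (by positivity)
  linarith [mul_nonneg (by positivity : (0:ℝ) ≤ x1*x1*x1) (sq_nonneg (x3 - x4)),
    mul_nonneg (by positivity : (0:ℝ) ≤ x1*x1*x2) (sq_nonneg (x1 - x4)),
    mul_nonneg (by positivity : (0:ℝ) ≤ x1*x1*x2) (sq_nonneg (x1 - x2 + x3 - x4)),
    mul_nonneg (by positivity : (0:ℝ) ≤ x1*x1*x3) (sq_nonneg (x3 - x4)),
    mul_nonneg (by positivity : (0:ℝ) ≤ x1*x1*x3) (sq_nonneg (x1 - x2 + x3 - x4)),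
    mul_nonneg (by positivity : (0:ℝ) ≤ x1*x1*x4) (sq_nonneg (x1 - x2)),
    mul_nonneg (by positivity : (0:ℝ) ≤ x1*x1*x4) (sq_nonneg (x1 - x4)),
    mul_nonneg (by positivity : (0:ℝ) ≤ x1*x1*x4) (sq_nonneg (x2 - x4)),
    mul_nonneg (by positivity : (0:ℝ) ≤ x1*x1*x4) (sq_nonneg (x3 - x4)),
    mul_nonneg (by positivity : (0:ℝ) ≤ x1*x1*x4) (sq_nonneg (x1 - x2 + x3 - x4)),
    mul_nonneg (by positivity : (0:ℝ) ≤ x1*x2*x2) (sq_nonneg (x1 - x2)),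
    mul_nonneg (by positivity : (0:ℝ) ≤ x1*x2*x2) (sq_nonneg (x1 - x2 + x3 - x4)),
    mul_nonneg (by positivity : (0:ℝ) ≤ x1*x2*x3) (sq_nonneg (x1 - x2)),
    mul_nonneg (by positivity : (0:ℝ) ≤ x1*x2*x3) (sq_nonneg (x1 - x4)),
    mul_nonneg (by positivity : (0:ℝ) ≤ x1*x2*x3) (sq_nonneg (x2 - x3)),
    mul_nonneg (by positivity : (0:ℝ) ≤ x1*x2*x3) (sq_nonneg (x2 - x4)),
    mul_nonneg (by positivity : (0:ℝ) ≤ x1*x2*x3) (sq_nonneg (x1 - x2 + x3 - x4)),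
    mul_nonneg (by positivity : (0:ℝ) ≤ x1*x2*x4) (sq_nonneg (x1 - x2)),
    mul_nonneg (by positivity : (0:ℝ) ≤ x1*x2*x4) (sq_nonneg (x2 - x3)),
    mul_nonneg (by positivity : (0:ℝ) ≤ x1*x2*x4) (sq_nonneg (x2 - x4)),
    mul_nonneg (by positivity : (0:ℝ) ≤ x1*x2*x4) (sq_nonneg (x1 - x2 + x3 - x4)),
    mul_nonneg (by positivity : (0:ℝ) ≤ x1*x3*x3) (sq_nonneg (x1 - x3)),
    mul_nonneg (by positivity : (0:ℝ) ≤ x1*x3*x3) (sq_nonneg (x1 - x4)),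
    mul_nonneg (by positivity : (0:ℝ) ≤ x1*x3*x3) (sq_nonneg (x2 - x3)),
    mul_nonneg (by positivity : (0:ℝ) ≤ x1*x3*x4) (sq_nonneg (x3 - x4)),
    mul_nonneg (by positivity : (0:ℝ) ≤ x1*x3*x4) (sq_nonneg (x1 - x2 + x3 - x4)),
    mul_nonneg (by positivity : (0:ℝ) ≤ x1*x4*x4) (sq_nonneg (x2 - x3)),
    mul_nonneg (by positivity : (0:ℝ) ≤ x1*x4*x4) (sq_nonneg (x1 - x2 + x3 - x4)),
    mul_nonneg (by positivity : (0:ℝ) ≤ x2*x2*x2) (sq_nonneg (x1 - x4)),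
    mul_nonneg (by positivity : (0:ℝ) ≤ x2*x2*x2) (sq_nonneg (x3 - x4)),
    mul_nonneg (by positivity : (0:ℝ) ≤ x2*x2*x3) (sq_nonneg (x3 - x4)),
    mul_nonneg (by positivity : (0:ℝ) ≤ x2*x2*x3) (sq_nonneg (x1 - x2 + x3 - x4)),
    mul_nonneg (by positivity : (0:ℝ) ≤ x2*x2*x4) (sq_nonneg (x1 - x2)),
    mul_nonneg (by positivity : (0:ℝ) ≤ x2*x2*x4) (sq_nonneg (x1 - x4)),
    mul_nonneg (by positivity : (0:ℝ) ≤ x2*x2*x4) (sq_nonneg (x1 - x2 + x3 - x4)),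
    mul_nonneg (by positivity : (0:ℝ) ≤ x2*x3*x3) (sq_nonneg (x1 - x2)),
    mul_nonneg (by positivity : (0:ℝ) ≤ x2*x3*x3) (sq_nonneg (x2 - x3)),
    mul_nonneg (by positivity : (0:ℝ) ≤ x2*x3*x3) (sq_nonneg (x1 - x2 + x3 - x4)),
    mul_nonneg (by positivity : (0:ℝ) ≤ x2*x3*x4) (sq_nonneg (x1 - x2)),
    mul_nonneg (by positivity : (0:ℝ) ≤ x2*x3*x4) (sq_nonneg (x3 - x4)),
    mul_nonneg (by positivity : (0:ℝ) ≤ x2*x4*x4) (sq_nonneg (x1 - x4)),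
    mul_nonneg (by positivity : (0:ℝ) ≤ x2*x4*x4) (sq_nonneg (x3 - x4)),
    mul_nonneg (by positivity : (0:ℝ) ≤ x3*x3*x4) (sq_nonneg (x1 - x3)),
    mul_nonneg (by positivity : (0:ℝ) ≤ x3*x4*x4) (sq_nonneg (x1 - x4))]
end

section
/- Let G be a finite connected undirected graph with closed neighbourhoods N_i, and let x be a vector of strictly positive reals. For every vector p of nonnegative reals, ∑_i x_i^2 / (p_i / ∑_{j ∈ N_i} p_j) ≥ ∑_i x_i^2 / (x_i / ∑_{j ∈ N_i} x_j), where terms with p_i = 0 are interpreted as +∞ (or the inequality is restricted to p with all p_i > 0). That is, the rates φ_i(x) = x_i/∑_{j∈N_i} x_j are 2-fair within the class of rate vectors achievable by the CSMA priority scheme. -/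
theorem stmt_12 {V : Type*} [Fintype V] [DecidableEq V]
    (G : SimpleGraph V) [DecidableRel G.Adj] (hconn : G.Connected)
    (x : V → ℝ) (hx : ∀ i, 0 < x i)
    (p : V → ℝ) (hp : ∀ i, 0 < p i) :
    ∑ i, x i ^ 2 / (p i / ∑ j ∈ insert i (G.neighborFinset i), p j) ≥
      ∑ i, x i ^ 2 / (x i / ∑ j ∈ insert i (G.neighborFinset i), x j) := by
  classical
  have hmem : ∀ i j : V, j ∈ insert i (G.neighborFinset i) ↔ i ∈ insert j (G.neighborFinset j) := by
    intro i j
    simp only [Finset.mem_insert, SimpleGraph.mem_neighborFinset]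
    constructor
    · rintro (h | h)
      · exact Or.inl h.symm
      · exact Or.inr h.symm
    · rintro (h | h)
      · exact Or.inl h.symm
      · exact Or.inr h.symm
  have expand : ∀ (q : V → ℝ), (∀ i, 0 < q i) →
      ∑ i, x i ^ 2 / (q i / ∑ j ∈ insert i (G.neighborFinset i), q j)
        = ∑ i, ∑ j ∈ insert i (G.neighborFinset i), x i ^ 2 * q j / q i := by
    intro q hq
    refine Finset.sum_congr rfl fun i _ => ?_
    rw [div_div_eq_mul_div, Finset.mul_sum, Finset.sum_div]
  rw [ge_iff_le, expand x hx, expand p hp]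
  have hR : ∑ i, ∑ j ∈ insert i (G.neighborFinset i), x i ^ 2 * x j / x i
      = ∑ i, ∑ j ∈ insert i (G.neighborFinset i), x i * x j := by
    refine Finset.sum_congr rfl fun i _ => Finset.sum_congr rfl fun j _ => ?_
    rw [div_eq_iff (hx i).ne']
    ring
  rw [hR]
  have swap : ∑ i, ∑ j ∈ insert i (G.neighborFinset i), x i ^ 2 * p j / p i
      = ∑ i, ∑ j ∈ insert i (G.neighborFinset i), x j ^ 2 * p i / p j := by
    exact Finset.sum_comm' fun i j => by simp [hmem i j]
  have pair : ∑ i, ∑ j ∈ insert i (G.neighborFinset i), (2 * (x i * x j))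
      ≤ ∑ i, ∑ j ∈ insert i (G.neighborFinset i),
          (x i ^ 2 * p j / p i + x j ^ 2 * p i / p j) := by
    refine Finset.sum_le_sum fun i _ => Finset.sum_le_sum fun j _ => ?_
    have hpi := hp i
    have hpj := hp j
    rw [div_add_div _ _ hpi.ne' hpj.ne', le_div_iff₀ (mul_pos hpi hpj)]
    nlinarith [sq_nonneg (x i * p j - x j * p i), hpi.le, hpj.le]
  have hsplit : ∑ i, ∑ j ∈ insert i (G.neighborFinset i),
      (x i ^ 2 * p j / p i + x j ^ 2 * p i / p j)
      = (∑ i, ∑ j ∈ insert i (G.neighborFinset i), x i ^ 2 * p j / p i)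
        + ∑ i, ∑ j ∈ insert i (G.neighborFinset i), x j ^ 2 * p i / p j := by
    simp [Finset.sum_add_distrib]
  have hmul : ∑ i, ∑ j ∈ insert i (G.neighborFinset i), (2 * (x i * x j))
      = 2 * ∑ i, ∑ j ∈ insert i (G.neighborFinset i), x i * x j := by
    rw [Finset.mul_sum]
    exact Finset.sum_congr rfl fun i _ => (Finset.mul_sum _ _ _).symm
  rw [hsplit, ← swap, hmul] at pair
  linarith
end
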